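/- arXiv:2103.03495 — 5 statements merged into one kernel-verified Lean document; each statement's English description precedes it below -/
import Mathlib

section
/- Let A be a unital C*-algebra, let a ∈ A be self-adjoint, and let κ₀ > 0 be a real number such that a - κ₀·1 is positive. Then for every b ∈ A, the function μ ↦ (a + μ²·1)⁻¹ (a b - b a) (a + μ²·1)⁻¹ from [0, ∞) to A is Bochner integrable, and b · a^{-1/2} - a^{-1/2} · b = (2/π) ∫₀^∞ (a + μ²·1)⁻¹ (a b - b a) (a + μ²·1)⁻¹ dμ. -/
open MeasureTheory

section Aux
open Set Real

lemma aux_scalar_integrable {c : ℝ} (hc : 0 < c) :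
    IntegrableOn (fun μ : ℝ => (c + μ ^ 2)⁻¹) (Set.Ioi 0) := by
  have hsc : 0 < Real.sqrt c := Real.sqrt_pos.mpr hc
  have h := (integrable_inv_one_add_sq.comp_mul_right' (R := (Real.sqrt c)⁻¹)
    (by positivity)).const_mul c⁻¹
  have heq : (fun μ : ℝ => c⁻¹ * (1 + (μ * (Real.sqrt c)⁻¹) ^ 2)⁻¹)
      = fun μ : ℝ => (c + μ ^ 2)⁻¹ := by
    funext μ
    rw [mul_pow, inv_pow, Real.sq_sqrt hc.le]
    field_simp
  rw [heq] at h
  exact h.integrableOn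

lemma aux_scalar_integral {c : ℝ} (hc : 0 < c) :
    ∫ μ in Set.Ioi (0:ℝ), (c + μ ^ 2)⁻¹ = Real.pi / (2 * Real.sqrt c) := by
  have hsc : 0 < Real.sqrt c := Real.sqrt_pos.mpr hc
  have h2 := MeasureTheory.integral_comp_mul_right_Ioi
    (fun t => (1 + t ^ 2)⁻¹) 0 (inv_pos.mpr hsc)
  simp only [zero_mul] at h2
  rw [integral_Ioi_inv_one_add_sq, Real.arctan_zero, sub_zero] at h2
  have heq : ∀ μ : ℝ, (1 + (μ * (Real.sqrt c)⁻¹) ^ 2)⁻¹ = c * (c + μ ^ 2)⁻¹ := by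
    intro μ
    rw [mul_pow, inv_pow, Real.sq_sqrt hc.le]
    field_simp
  simp only [heq] at h2
  rw [integral_const_mul] at h2
  have hcs : (Real.sqrt c)⁻¹⁻¹ = Real.sqrt c := inv_inv _
  rw [hcs, smul_eq_mul] at h2
  have : ∫ μ in Set.Ioi (0:ℝ), (c + μ ^ 2)⁻¹ = c⁻¹ * (Real.sqrt c * (π / 2)) := by
    field_simp at h2 ⊢
    linarith
  rw [this]
  rw [eq_div_iff (by positivity)]
  have hss : Real.sqrt c * Real.sqrt c = c := Real.mul_self_sqrt hc.le
  field_simp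
  linear_combination hss

end Aux

open Set Real in
/-- In a unital C*-algebra, if `a` is self-adjoint and `a - κ₀·1` is
positive for some real `κ₀ > 0`, then for every `b` the function
`μ ↦ (a + μ²·1)⁻¹ (ab - ba) (a + μ²·1)⁻¹` is Bochner integrable on `[0, ∞)` and
`b·a^{-1/2} - a^{-1/2}·b = (2/π) ∫₀^∞ (a + μ²·1)⁻¹ (ab - ba) (a + μ²·1)⁻¹ dμ`. -/
theorem stmt4 {A : Type*} [CStarAlgebra A] [PartialOrder A] [StarOrderedRing A]
    (a : A) (ha : IsSelfAdjoint a) (κ₀ : ℝ) (hκ : 0 < κ₀)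
    (hpos : 0 ≤ a - κ₀ • (1 : A)) :
    ∀ b : A,
      IntegrableOn
        (fun μ : ℝ => Ring.inverse (a + μ ^ 2 • (1 : A)) * (a * b - b * a) *
          Ring.inverse (a + μ ^ 2 • (1 : A))) (Set.Ioi 0) ∧
      b * Ring.inverse (CFC.sqrt a) - Ring.inverse (CFC.sqrt a) * b =
        (2 / Real.pi) • ∫ μ in Set.Ioi (0 : ℝ),
          Ring.inverse (a + μ ^ 2 • (1 : A)) * (a * b - b * a) *
            Ring.inverse (a + μ ^ 2 • (1 : A)) := by
  intro b
  -- spectrum bound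
  have hσ : ∀ x ∈ spectrum ℝ a, κ₀ ≤ x := by
    intro x hx
    have h1a : κ₀ • (1:A) = algebraMap ℝ A κ₀ := (Algebra.algebraMap_eq_smul_one κ₀).symm
    have hsub : x - κ₀ ∈ spectrum ℝ (a - algebraMap ℝ A κ₀) := by
      rw [← spectrum.sub_singleton_eq]
      exact Set.sub_mem_sub hx rfl
    have := spectrum_nonneg_of_nonneg (by rwa [h1a] at hpos) hsub
    linarith
  have hxpos : ∀ (μ : ℝ), ∀ x ∈ spectrum ℝ a, 0 < x + μ ^ 2 := by
    intro μ x hx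
    nlinarith [hσ x hx, sq_nonneg μ]
  have hne : ∀ (μ : ℝ), ∀ x ∈ spectrum ℝ a, x + μ ^ 2 ≠ 0 :=
    fun μ x hx => ne_of_gt (hxpos μ x hx)
  -- the continuous-map-valued function
  have hHcont : Continuous fun p : ℝ × (spectrum ℝ a) => (((p.2 : ℝ) + p.1 ^ 2)⁻¹ : ℝ) := by
    apply Continuous.inv₀
    · fun_prop
    · exact fun p => hne p.1 p.2 p.2.2
  let H : C(ℝ × (spectrum ℝ a), ℝ) := ⟨_, hHcont⟩
  let F : ℝ → C(spectrum ℝ a, ℝ) := fun μ => H.curry μ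
  have hFcont : Continuous F := H.curry.continuous
  have hF_norm : ∀ μ : ℝ, ‖F μ‖ ≤ (κ₀ + μ ^ 2)⁻¹ := by
    intro μ
    refine (ContinuousMap.norm_le _ (by positivity)).mpr fun x => ?_
    have h1 : (0:ℝ) < κ₀ + μ ^ 2 := by positivity
    have h2 : κ₀ + μ ^ 2 ≤ (x:ℝ) + μ ^ 2 := by
      have := hσ x x.2; linarith
    show ‖((x:ℝ) + μ ^ 2)⁻¹‖ ≤ (κ₀ + μ ^ 2)⁻¹
    rw [Real.norm_eq_abs, abs_of_nonneg (le_of_lt (inv_pos.mpr (hxpos μ x x.2)))]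
    exact inv_anti₀ h1 h2
  have hFi : IntegrableOn F (Set.Ioi 0) := by
    refine Integrable.mono' (aux_scalar_integrable hκ) hFcont.aestronglyMeasurable.restrict ?_
    exact Filter.Eventually.of_forall fun μ => hF_norm μ
  -- integral of F
  have hGcont : ContinuousOn (fun x : ℝ => (Real.sqrt x)⁻¹) (spectrum ℝ a) := by
    apply ContinuousOn.inv₀
    · fun_prop
    · exact fun x hx => ne_of_gt (Real.sqrt_pos.mpr (lt_of_lt_of_le hκ (hσ x hx)))
  let G : C(spectrum ℝ a, ℝ) := ⟨(spectrum ℝ a).restrict fun x => (Real.sqrt x)⁻¹,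
    hGcont.restrict⟩
  have hFint : ∫ μ in Set.Ioi (0:ℝ), F μ = (Real.pi / 2) • G := by
    ext x
    rw [ContinuousMap.integral_apply hFi x]
    have hx : (0:ℝ) < x := lt_of_lt_of_le hκ (hσ x x.2)
    have : (∫ μ in Set.Ioi (0:ℝ), F μ x) = ∫ μ in Set.Ioi (0:ℝ), ((x:ℝ) + μ ^ 2)⁻¹ := by
      congr 1
    rw [this, aux_scalar_integral hx]
    show Real.pi / (2 * Real.sqrt x) = (Real.pi / 2) * (Real.sqrt x)⁻¹
    ring
  -- the CLM from cfcHom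
  let L : C(spectrum ℝ a, ℝ) →L[ℝ] A :=
    { toLinearMap := ((cfcHom ha (R := ℝ)).toAlgHom : C(spectrum ℝ a, ℝ) →ₐ[ℝ] A).toLinearMap,
      cont := (cfcHom_isClosedEmbedding ha).continuous }
  have hLdef : ∀ f : C(spectrum ℝ a, ℝ), L f = cfcHom ha f := fun _ => rfl
  -- identify L (F μ) with the resolvent
  have hcont1 : ∀ μ : ℝ, ContinuousOn (fun x : ℝ => (x + μ ^ 2)⁻¹) (spectrum ℝ a) := by
    intro μ
    exact ContinuousOn.inv₀ (by fun_prop) (hne μ)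
  have hu_eq : ∀ μ : ℝ, cfc (fun x : ℝ => x + μ ^ 2) a = a + μ ^ 2 • (1:A) := by
    intro μ
    rw [show (fun x : ℝ => x + μ ^ 2) = (fun x : ℝ => id x + μ ^ 2) from rfl,
      cfc_add_const (μ ^ 2) (id : ℝ → ℝ) a, cfc_id ℝ a, Algebra.algebraMap_eq_smul_one]
  have hRinv : ∀ μ : ℝ, Ring.inverse (a + μ ^ 2 • (1:A))
      = cfc (fun x : ℝ => (x + μ ^ 2)⁻¹) a := by
    intro μ
    rw [← hu_eq μ, ← cfc_inv (fun x : ℝ => x + μ ^ 2) a (hne μ)]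
  have hLF : ∀ μ : ℝ, cfc (fun x : ℝ => (x + μ ^ 2)⁻¹) a = L (F μ) := by
    intro μ
    rw [cfc_apply (fun x : ℝ => (x + μ ^ 2)⁻¹) a ha (hcont1 μ), hLdef]
    congr 1
  have hfunR : (fun μ : ℝ => Ring.inverse (a + μ ^ 2 • (1:A))) = fun μ => L (F μ) := by
    funext μ; rw [hRinv, hLF]
  have hRint : IntegrableOn (fun μ : ℝ => Ring.inverse (a + μ ^ 2 • (1:A))) (Set.Ioi 0) := by
    rw [hfunR]; exact L.integrable_comp hFi
  -- sqrt
  have ha0 : (0:A) ≤ a := by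
    rw [StarOrderedRing.nonneg_iff_spectrum_nonneg (R := ℝ) a ha]
    exact fun x hx => le_trans hκ.le (hσ x hx)
  have hsqrt : CFC.sqrt a = cfc Real.sqrt a := by
    refine CFC.sqrt_unique ?_ (cfc_nonneg fun x _ => Real.sqrt_nonneg x)
    rw [← cfc_mul Real.sqrt Real.sqrt a]
    calc cfc (fun x => Real.sqrt x * Real.sqrt x) a = cfc (id : ℝ → ℝ) a :=
          cfc_congr fun x hx => Real.mul_self_sqrt (le_trans hκ.le (hσ x hx))
      _ = a := cfc_id ℝ a
  have hinv_sqrt : Ring.inverse (CFC.sqrt a) = cfc (fun x : ℝ => (Real.sqrt x)⁻¹) a := by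
    rw [hsqrt, ← cfc_inv Real.sqrt a
      (fun x hx => ne_of_gt (Real.sqrt_pos.mpr (lt_of_lt_of_le hκ (hσ x hx))))]
  have hLG : L G = cfc (fun x : ℝ => (Real.sqrt x)⁻¹) a := by
    rw [cfc_apply (fun x : ℝ => (Real.sqrt x)⁻¹) a ha hGcont, hLdef]
    rfl
  -- the key integral identity
  have hIa : (∫ μ in Set.Ioi (0:ℝ), Ring.inverse (a + μ ^ 2 • (1:A)))
      = (Real.pi / 2) • Ring.inverse (CFC.sqrt a) := by
    rw [hfunR, L.integral_comp_comm hFi, hFint, L.map_smul, hLG, hinv_sqrt]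
  -- units
  have hunit : ∀ μ : ℝ, IsUnit (a + μ ^ 2 • (1:A)) := by
    intro μ
    rw [← hu_eq μ]
    exact ⟨cfcUnits (fun x : ℝ => x + μ ^ 2) a (hne μ), rfl⟩
  -- commutator identity
  have hcomm : ∀ μ : ℝ, Ring.inverse (a + μ ^ 2 • (1:A)) * (a * b - b * a) *
        Ring.inverse (a + μ ^ 2 • (1:A))
      = b * Ring.inverse (a + μ ^ 2 • (1:A)) - Ring.inverse (a + μ ^ 2 • (1:A)) * b := by
    intro μ
    set u := a + μ ^ 2 • (1:A) with hu
    set v := Ring.inverse u with hv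
    have h1 : v * u = 1 := Ring.inverse_mul_cancel u (hunit μ)
    have h2 : u * v = 1 := Ring.mul_inverse_cancel u (hunit μ)
    have hab : a * b - b * a = u * b - b * u := by
      simp only [hu, add_mul, mul_add, smul_mul_assoc, mul_smul_comm, one_mul, mul_one]
      abel
    calc v * (a * b - b * a) * v = v * (u * b - b * u) * v := by rw [hab]
      _ = (v * u) * (b * v) - (v * b) * (u * v) := by noncomm_ring
      _ = b * v - v * b := by rw [h1, h2, one_mul, mul_one]
  have hfun2 : (fun μ : ℝ => Ring.inverse (a + μ ^ 2 • (1:A)) * (a * b - b * a) *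
        Ring.inverse (a + μ ^ 2 • (1:A)))
      = fun μ : ℝ => b * Ring.inverse (a + μ ^ 2 • (1:A))
        - Ring.inverse (a + μ ^ 2 • (1:A)) * b := funext hcomm
  have hint1 : IntegrableOn (fun μ : ℝ => b * Ring.inverse (a + μ ^ 2 • (1:A))) (Set.Ioi 0) :=
    (ContinuousLinearMap.mul ℝ A b).integrable_comp hRint
  have hint2 : IntegrableOn (fun μ : ℝ => Ring.inverse (a + μ ^ 2 • (1:A)) * b) (Set.Ioi 0) :=
    ((ContinuousLinearMap.mul ℝ A).flip b).integrable_comp hRint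
  constructor
  · rw [hfun2]; exact hint1.sub hint2
  · have e1 : (∫ μ in Set.Ioi (0:ℝ), b * Ring.inverse (a + μ ^ 2 • (1:A)))
        = b * ∫ μ in Set.Ioi (0:ℝ), Ring.inverse (a + μ ^ 2 • (1:A)) := by
      simpa using (ContinuousLinearMap.mul ℝ A b).integral_comp_comm hRint
    have e2 : (∫ μ in Set.Ioi (0:ℝ), Ring.inverse (a + μ ^ 2 • (1:A)) * b)
        = (∫ μ in Set.Ioi (0:ℝ), Ring.inverse (a + μ ^ 2 • (1:A))) * b := by
      simpa using ((ContinuousLinearMap.mul ℝ A).flip b).integral_comp_comm hRint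
    rw [hfun2, integral_sub hint1 hint2, e1, e2, hIa, mul_smul_comm, smul_mul_assoc, ← smul_sub, smul_smul,
      div_mul_div_comm, mul_comm (2:ℝ) Real.pi, div_self (by positivity), one_smul]
end

section
/- Let A be a unital C*-algebra, let a ∈ A be self-adjoint, and let κ₀ > 0 be a real number such that a - κ₀·1 is positive. Then for every b ∈ A, ‖b · a^{-1/2} - a^{-1/2} · b‖ ≤ ‖a b - b a‖ / (2 κ₀^{3/2}). -/
open Real MeasureTheory Set Filter Topology

section scalars
variable {a b : ℝ}

lemma scalar1 {t : ℝ} (ht : 0 < t) :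
    (∫ μ in Ioi (0:ℝ), (t + μ ^ 2)⁻¹) = π / (2 * Real.sqrt t) ∧
    IntegrableOn (fun μ : ℝ => (t + μ ^ 2)⁻¹) (Ioi 0) := by
  have hst : 0 < Real.sqrt t := Real.sqrt_pos.mpr ht
  set F : ℝ → ℝ := fun μ => Real.arctan (μ / Real.sqrt t) / Real.sqrt t with hF
  have hderiv : ∀ μ ∈ Ici (0:ℝ), HasDerivAt F ((t + μ ^ 2)⁻¹) μ := by
    intro μ _
    have h1 : HasDerivAt (fun μ : ℝ => μ / Real.sqrt t) (1 / Real.sqrt t) μ := by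
      simpa using (hasDerivAt_id μ).div_const (Real.sqrt t)
    have h2 := (Real.hasDerivAt_arctan (μ / Real.sqrt t)).comp μ h1
    have h3 := h2.div_const (Real.sqrt t)
    refine h3.congr_deriv ?_
    have hs2 : Real.sqrt t ^ 2 = t := Real.sq_sqrt ht.le
    field_simp
    ring_nf
    rw [Real.sq_sqrt ht.le]
    ring
  have hpos : ∀ μ ∈ Ioi (0:ℝ), 0 ≤ (t + μ ^ 2)⁻¹ := fun μ _ => by positivity
  have htend : Tendsto F atTop (𝓝 (π / (2 * Real.sqrt t))) := by
    have h1 : Tendsto (fun μ : ℝ => μ / Real.sqrt t) atTop atTop :=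
      tendsto_id.atTop_div_const hst
    have h2 := (Real.tendsto_arctan_atTop.comp h1)
    have h2' : Tendsto (fun μ : ℝ => Real.arctan (μ / Real.sqrt t)) atTop (𝓝 (π/2)) :=
      tendsto_nhds_of_tendsto_nhdsWithin h2
    have := h2'.div_const (Real.sqrt t)
    convert this using 2
    ring
  have hint := integrableOn_Ioi_deriv_of_nonneg' hderiv hpos htend
  refine ⟨?_, hint⟩
  have := integral_Ioi_of_hasDerivAt_of_nonneg' hderiv hpos htend
  simp [hF] at this
  simpa using this


lemma scalar2 {t : ℝ} (ht : 0 < t) :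
    (∫ μ in Ioi (0:ℝ), ((t + μ ^ 2) ^ 2)⁻¹) = π / (4 * (t * Real.sqrt t)) ∧
    IntegrableOn (fun μ : ℝ => ((t + μ ^ 2) ^ 2)⁻¹) (Ioi 0) := by
  have hst : 0 < Real.sqrt t := Real.sqrt_pos.mpr ht
  have hs2 : Real.sqrt t ^ 2 = t := Real.sq_sqrt ht.le
  set G : ℝ → ℝ := fun μ =>
    μ / (2 * t * (t + μ ^ 2)) + Real.arctan (μ / Real.sqrt t) / (2 * t * Real.sqrt t) with hG
  have hderiv : ∀ μ ∈ Ici (0:ℝ), HasDerivAt G (((t + μ ^ 2) ^ 2)⁻¹) μ := by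
    intro μ _
    have hne : 2 * t * (t + μ ^ 2) ≠ 0 := by positivity
    have h0 : HasDerivAt (fun μ : ℝ => 2 * t * (t + μ ^ 2)) (2 * t * (2 * μ)) μ := by
      have : HasDerivAt (fun μ : ℝ => t + μ ^ 2) (2 * μ) μ := by
        simpa using (hasDerivAt_pow 2 μ).const_add t
      simpa using this.const_mul (2 * t)
    have h1 : HasDerivAt (fun μ : ℝ => μ / (2 * t * (t + μ ^ 2)))
        ((1 * (2 * t * (t + μ ^ 2)) - μ * (2 * t * (2 * μ))) / (2 * t * (t + μ ^ 2)) ^ 2) μ :=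
      (hasDerivAt_id μ).div h0 hne
    have h2 : HasDerivAt (fun μ : ℝ => μ / Real.sqrt t) (1 / Real.sqrt t) μ := by
      simpa using (hasDerivAt_id μ).div_const (Real.sqrt t)
    have h3 := ((Real.hasDerivAt_arctan (μ / Real.sqrt t)).comp μ h2).div_const
      (2 * t * Real.sqrt t)
    have h4 := h1.add h3
    refine h4.congr_deriv ?_
    have htμ : t + μ ^ 2 ≠ 0 := by positivity
    field_simp
    ring_nf
    rw [Real.sq_sqrt ht.le]
    ring
  have hpos : ∀ μ ∈ Ioi (0:ℝ), 0 ≤ ((t + μ ^ 2) ^ 2)⁻¹ := fun μ _ => by positivity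
  have htend : Tendsto G atTop (𝓝 (π / (4 * (t * Real.sqrt t)))) := by
    have hA : Tendsto (fun μ : ℝ => μ / (2 * t * (t + μ ^ 2))) atTop (𝓝 0) := by
      have hup : Tendsto (fun μ : ℝ => (2*t)⁻¹ * μ⁻¹) atTop (𝓝 0) := by
        simpa using tendsto_inv_atTop_zero.const_mul ((2*t)⁻¹)
      apply tendsto_of_tendsto_of_tendsto_of_le_of_le' tendsto_const_nhds hup
      · filter_upwards [eventually_gt_atTop (0:ℝ)] with μ hμ
        positivity
      · filter_upwards [eventually_gt_atTop (0:ℝ)] with μ hμ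
        calc μ / (2*t*(t+μ^2)) ≤ μ / (2*t*μ^2) :=
              div_le_div_of_nonneg_left hμ.le (by positivity) (by nlinarith)
          _ = (2*t)⁻¹ * μ⁻¹ := by field_simp
    have h1 : Tendsto (fun μ : ℝ => μ / Real.sqrt t) atTop atTop :=
      tendsto_id.atTop_div_const hst
    have h2' : Tendsto (fun μ : ℝ => Real.arctan (μ / Real.sqrt t)) atTop (𝓝 (π/2)) :=
      tendsto_nhds_of_tendsto_nhdsWithin (Real.tendsto_arctan_atTop.comp h1)
    have h3 := hA.add (h2'.div_const (2 * t * Real.sqrt t))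
    simp only [zero_add] at h3
    have he : π / 2 / (2 * t * Real.sqrt t) = π / (4 * (t * Real.sqrt t)) := by
      rw [div_div]; congr 1; ring
    exact he ▸ h3
  have hint := integrableOn_Ioi_deriv_of_nonneg' hderiv hpos htend
  refine ⟨?_, hint⟩
  have := integral_Ioi_of_hasDerivAt_of_nonneg' hderiv hpos htend
  simp [hG] at this
  simpa using this

end scalars


set_option maxHeartbeats 1000000 in

/-- In a unital C*-algebra, if `a` is self-adjoint and `a - κ₀·1` is
positive for some real `κ₀ > 0`, then for every `b`,
`‖b·a^{-1/2} - a^{-1/2}·b‖ ≤ ‖ab - ba‖ / (2 κ₀^{3/2})`. -/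
theorem stmt5 {A : Type*} [CStarAlgebra A] [PartialOrder A] [StarOrderedRing A]
    (a : A) (ha : IsSelfAdjoint a) (κ₀ : ℝ) (hκ : 0 < κ₀)
    (hpos : 0 ≤ a - κ₀ • (1 : A)) :
    ∀ b : A,
      ‖b * Ring.inverse (CFC.sqrt a) - Ring.inverse (CFC.sqrt a) * b‖ ≤
        ‖a * b - b * a‖ / (2 * κ₀ ^ ((3 : ℝ) / 2)) := by
  intro b
  have hspec : spectrum ℝ a ⊆ Set.Ici κ₀ := by
    intro t ht
    have h1 : spectrum ℝ (a - κ₀ • (1:A)) ⊆ Set.Ici 0 := by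
      intro s' hs'
      exact (StarOrderedRing.nonneg_iff_spectrum_nonneg (R := ℝ) _ |>.mp hpos) s' hs'
    have h2 : t - κ₀ ∈ spectrum ℝ (a - κ₀ • (1:A)) := by
      rw [← Algebra.algebraMap_eq_smul_one, ← spectrum.sub_singleton_eq]
      exact Set.sub_mem_sub ht rfl
    simpa using sub_nonneg.mp (h1 h2)
  have hapos : ∀ x ∈ spectrum ℝ a, 0 < x := fun x hx => lt_of_lt_of_le hκ (hspec hx)
  have ha0 : (0:A) ≤ a := by
    have h1 : κ₀ • (1:A) ≤ a := sub_nonneg.mp hpos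
    have h2 : (0:A) ≤ κ₀ • (1:A) :=
      smul_nonneg hκ.le (by simpa using star_mul_self_nonneg (1:A))
    exact h2.trans h1
  -- square root and its inverse via real cfc
  set s : A := cfc Real.sqrt a with hs
  have hsnn : 0 ≤ s := cfc_nonneg (fun x _ => Real.sqrt_nonneg x)
  have hss : s * s = a := by
    rw [hs, ← cfc_mul _ _ a]
    calc cfc (fun x => Real.sqrt x * Real.sqrt x) a = cfc (fun x : ℝ => x) a :=
          cfc_congr fun x hx => Real.mul_self_sqrt (hapos x hx).le
      _ = a := cfc_id ℝ a
  have hsqrt : CFC.sqrt a = s := CFC.sqrt_unique hss hsnn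
  set c : A := cfc (fun x : ℝ => (Real.sqrt x)⁻¹) a with hc
  have hcont_c : ContinuousOn (fun x : ℝ => (Real.sqrt x)⁻¹) (spectrum ℝ a) := by
    apply ContinuousOn.inv₀ (Real.continuous_sqrt.continuousOn)
    exact fun x hx => Real.sqrt_ne_zero'.mpr (hapos x hx)
  have hcs : c * s = 1 := by
    rw [hc, hs, ← cfc_mul _ _ a hcont_c Real.continuous_sqrt.continuousOn]
    calc cfc (fun x => (Real.sqrt x)⁻¹ * Real.sqrt x) a = cfc (fun _ : ℝ => (1:ℝ)) a :=
          cfc_congr fun x hx => inv_mul_cancel₀ (Real.sqrt_ne_zero'.mpr (hapos x hx))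
      _ = 1 := cfc_one ℝ a
  have hsc : s * c = 1 := by
    rw [hc, hs, ← cfc_mul _ _ a Real.continuous_sqrt.continuousOn hcont_c]
    calc cfc (fun x => Real.sqrt x * (Real.sqrt x)⁻¹) a = cfc (fun _ : ℝ => (1:ℝ)) a :=
          cfc_congr fun x hx => mul_inv_cancel₀ (Real.sqrt_ne_zero'.mpr (hapos x hx))
      _ = 1 := cfc_one ℝ a
  have hinv : Ring.inverse (CFC.sqrt a) = c := by
    rw [hsqrt]; exact Ring.inverse_unit ⟨s, c, hsc, hcs⟩
  rw [hinv]
  -- the resolvent family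
  set f : ℝ → A := fun μ => cfc (fun x : ℝ => (x + μ ^ 2)⁻¹) a with hf
  have hcont_f : ∀ μ : ℝ, ContinuousOn (fun x : ℝ => (x + μ ^ 2)⁻¹) (spectrum ℝ a) := by
    intro μ
    apply ContinuousOn.inv₀ (by fun_prop)
    exact fun x hx => by nlinarith [hapos x hx, sq_nonneg μ]
  -- cfcHom as a continuous linear map
  set φ : C(spectrum ℝ a, ℝ) →L[ℝ] A :=
    ⟨(cfcHom ha (R := ℝ)).toAlgHom.toLinearMap, cfcHom_continuous ha⟩ with hφ
  -- the family as continuous maps on the spectrum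
  set Gc : C(ℝ × spectrum ℝ a, ℝ) :=
    ⟨fun p => ((p.2 : ℝ) + p.1 ^ 2)⁻¹, by
      apply Continuous.inv₀ (by fun_prop)
      rintro ⟨μ, x⟩
      have := hapos x x.2
      dsimp only
      nlinarith [sq_nonneg μ]⟩ with hGc
  set G : ℝ → C(spectrum ℝ a, ℝ) := fun μ => Gc.curry μ with hG
  have hGf : ∀ μ, φ (G μ) = f μ := by
    intro μ
    show φ (G μ) = cfc (fun x : ℝ => (x + μ ^ 2)⁻¹) a
    rw [cfc_apply (fun x : ℝ => (x + μ ^ 2)⁻¹) a ha (hcont_f μ)]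
    have hGμ : G μ = ⟨_, (hcont_f μ).restrict⟩ := by ext x; rfl
    rw [hGμ]
    rfl
  have hGnorm : ∀ μ : ℝ, ‖G μ‖ ≤ (κ₀ + μ ^ 2)⁻¹ := by
    intro μ
    apply ContinuousMap.norm_le _ (by positivity) |>.mpr
    intro x
    have hx := hspec x.2
    show ‖((x:ℝ) + μ ^ 2)⁻¹‖ ≤ (κ₀ + μ ^ 2)⁻¹
    rw [Real.norm_eq_abs,
      abs_of_pos (inv_pos.mpr (by nlinarith [hapos x x.2, sq_nonneg μ]))]
    apply inv_anti₀ (by positivity)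
    have hxx : κ₀ ≤ (x:ℝ) := hx
    linarith
  have hGmeas : AEStronglyMeasurable G (volume.restrict (Ioi 0)) :=
    Gc.curry.continuous.aestronglyMeasurable
  have hdom := (scalar1 hκ).2
  have hGint : IntegrableOn G (Ioi 0) := by
    apply Integrable.mono' hdom hGmeas
    filter_upwards with μ using hGnorm μ
  have hFint : IntegrableOn f (Ioi 0) := by
    have := φ.integrable_comp hGint
    apply this.congr
    filter_upwards with μ using hGf μ
  -- the integral identity
  set isq : C(spectrum ℝ a, ℝ) :=
    ⟨fun x => (Real.sqrt x)⁻¹, by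
      apply Continuous.inv₀ (by fun_prop)
      exact fun x => Real.sqrt_ne_zero'.mpr (hapos x x.2)⟩ with hisq
  have hGeval : (∫ μ in Ioi (0:ℝ), G μ) = (π/2) • isq := by
    ext x
    have hx := hapos x x.2
    have h1 := (ContinuousMap.evalCLM ℝ x).integral_comp_comm hGint
    have h2 : (ContinuousMap.evalCLM ℝ x) (∫ μ in Ioi (0:ℝ), G μ)
        = ∫ μ in Ioi (0:ℝ), ((x:ℝ) + μ ^ 2)⁻¹ := by
      rw [← h1]; rfl
    calc (∫ μ in Ioi (0:ℝ), G μ) x = ∫ μ in Ioi (0:ℝ), ((x:ℝ) + μ ^ 2)⁻¹ := h2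
      _ = π / (2 * Real.sqrt x) := (scalar1 hx).1
      _ = ((π/2) • isq) x := by
          simp [hisq, div_eq_mul_inv, mul_inv]
          ring
  have hkey : (∫ μ in Ioi (0:ℝ), f μ) = (π/2) • c := by
    have h1 := φ.integral_comp_comm hGint
    have h2 : (∫ μ in Ioi (0:ℝ), φ (G μ)) = ∫ μ in Ioi (0:ℝ), f μ := by
      congr 1; ext μ; exact hGf μ
    rw [← h2, h1, hGeval, _root_.map_smul]
    congr 1
    rw [hc, cfc_apply (fun x : ℝ => (Real.sqrt x)⁻¹) a ha hcont_c]
    have hisq' : isq = ⟨_, hcont_c.restrict⟩ := by ext x; rfl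
    rw [hisq']
    rfl
  -- resolvent identity and commutator
  have hu : ∀ μ : ℝ, (a + μ ^ 2 • 1) * f μ = 1 ∧ f μ * (a + μ ^ 2 • 1) = 1 := by
    intro μ
    have hid : cfc (fun x : ℝ => x + μ ^ 2) a = a + μ ^ 2 • (1:A) := by
      rw [cfc_add a (fun x : ℝ => x) (fun _ => μ ^ 2), cfc_id' ℝ a, cfc_const (μ ^ 2) a,
        Algebra.algebraMap_eq_smul_one]
    constructor
    · rw [← hid, hf, ← cfc_mul _ _ a (by fun_prop) (hcont_f μ)]
      calc cfc (fun x : ℝ => (x + μ ^ 2) * (x + μ ^ 2)⁻¹) a = cfc (fun _ : ℝ => (1:ℝ)) a :=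
            cfc_congr fun x hx => mul_inv_cancel₀ (by nlinarith [hapos x hx, sq_nonneg μ])
        _ = 1 := cfc_one ℝ a
    · rw [← hid, hf, ← cfc_mul _ _ a (hcont_f μ) (by fun_prop)]
      calc cfc (fun x : ℝ => (x + μ ^ 2)⁻¹ * (x + μ ^ 2)) a = cfc (fun _ : ℝ => (1:ℝ)) a :=
            cfc_congr fun x hx => inv_mul_cancel₀ (by nlinarith [hapos x hx, sq_nonneg μ])
        _ = 1 := cfc_one ℝ a
  set d : A := a * b - b * a with hd
  have hcomm : ∀ μ : ℝ, b * f μ - f μ * b = f μ * d * f μ := by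
    intro μ
    obtain ⟨h1, h2⟩ := hu μ
    set u : A := a + μ ^ 2 • 1 with hu'
    have e1 : b * f μ = f μ * (u * (b * f μ)) := by rw [← mul_assoc, ← mul_assoc, h2, one_mul]
    have e2 : f μ * b = (f μ * b) * (u * f μ) := by rw [h1, mul_one]
    have e3 : u * b - b * u = d := by
      rw [hu', hd]
      simp only [add_mul, mul_add, smul_mul_assoc, mul_smul_comm, one_mul, mul_one]
      abel
    calc b * f μ - f μ * b = f μ * (u * (b * f μ)) - (f μ * b) * (u * f μ) := by
          rw [← e1, ← e2]
      _ = f μ * (u * b - b * u) * f μ := by noncomm_ring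
      _ = f μ * d * f μ := by rw [e3]
  have hfnorm : ∀ μ : ℝ, ‖f μ‖ ≤ (κ₀ + μ ^ 2)⁻¹ := by
    intro μ
    rw [hf]
    apply norm_cfc_le (by positivity)
    intro x hx
    have hxx : κ₀ ≤ x := hspec hx
    rw [Real.norm_eq_abs,
      abs_of_pos (inv_pos.mpr (by nlinarith [hapos x hx, sq_nonneg μ]))]
    apply inv_anti₀ (by positivity)
    linarith
  have hcommnorm : ∀ μ : ℝ, ‖b * f μ - f μ * b‖ ≤ ‖d‖ * ((κ₀ + μ ^ 2) ^ 2)⁻¹ := by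
    intro μ
    rw [hcomm μ]
    have hnn : (0:ℝ) ≤ ‖d‖ := norm_nonneg _
    have hipos : (0:ℝ) < (κ₀ + μ ^ 2)⁻¹ := inv_pos.mpr (by positivity)
    calc ‖f μ * d * f μ‖ ≤ ‖f μ * d‖ * ‖f μ‖ := norm_mul_le _ _
      _ ≤ (‖f μ‖ * ‖d‖) * ‖f μ‖ :=
          mul_le_mul_of_nonneg_right (norm_mul_le _ _) (norm_nonneg _)
      _ ≤ ((κ₀ + μ ^ 2)⁻¹ * ‖d‖) * (κ₀ + μ ^ 2)⁻¹ :=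
          mul_le_mul (mul_le_mul_of_nonneg_right (hfnorm μ) hnn) (hfnorm μ)
            (norm_nonneg _) (by positivity)
      _ = ‖d‖ * ((κ₀ + μ ^ 2) ^ 2)⁻¹ := by
          have hne : (κ₀ + μ ^ 2) ≠ 0 := by positivity
          field_simp
  -- put it together
  set L : A →L[ℝ] A :=
    ⟨LinearMap.mulLeft ℝ b - LinearMap.mulRight ℝ b, by
      show Continuous fun x : A => b * x - x * b
      exact (continuous_const.mul continuous_id).sub (continuous_id.mul continuous_const)⟩
    with hL
  have hLx : ∀ x : A, L x = b * x - x * b := fun x => rfl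
  have hπ : (0:ℝ) < π := Real.pi_pos
  have hcval : c = (2/π) • ∫ μ in Ioi (0:ℝ), f μ := by
    rw [hkey, smul_smul, div_mul_div_comm, mul_comm,
      div_self (by positivity : π * 2 ≠ 0), one_smul]
  have hLint := L.integral_comp_comm hFint
  have main : b * c - c * b = (2/π) • ∫ μ in Ioi (0:ℝ), (b * f μ - f μ * b) := by
    rw [← hLx, hcval, _root_.map_smul, ← hLint]
    rfl
  have hbound : ‖∫ μ in Ioi (0:ℝ), (b * f μ - f μ * b)‖ ≤ ‖d‖ * (π / (4 * (κ₀ * Real.sqrt κ₀))) := by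
    have hdint : IntegrableOn (fun μ : ℝ => ‖d‖ * ((κ₀ + μ ^ 2) ^ 2)⁻¹) (Ioi 0) :=
      (scalar2 hκ).2.const_mul _
    calc ‖∫ μ in Ioi (0:ℝ), (b * f μ - f μ * b)‖
        ≤ ∫ μ in Ioi (0:ℝ), ‖d‖ * ((κ₀ + μ ^ 2) ^ 2)⁻¹ := by
          apply norm_integral_le_of_norm_le hdint
          filter_upwards with μ using hcommnorm μ
      _ = ‖d‖ * ∫ μ in Ioi (0:ℝ), ((κ₀ + μ ^ 2) ^ 2)⁻¹ := integral_const_mul _ _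
      _ = ‖d‖ * (π / (4 * (κ₀ * Real.sqrt κ₀))) := by rw [(scalar2 hκ).1]
  have hfinal : ‖b * c - c * b‖ ≤ ‖d‖ / (2 * (κ₀ * Real.sqrt κ₀)) := by
    rw [main, norm_smul]
    have : ‖(2/π : ℝ)‖ = 2/π := by
      rw [Real.norm_eq_abs, abs_of_pos (by positivity)]
    rw [this]
    calc (2/π) * ‖∫ μ in Ioi (0:ℝ), (b * f μ - f μ * b)‖
        ≤ (2/π) * (‖d‖ * (π / (4 * (κ₀ * Real.sqrt κ₀)))) :=
          mul_le_mul_of_nonneg_left hbound (by positivity)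
      _ = ‖d‖ / (2 * (κ₀ * Real.sqrt κ₀)) := by
          have h1 : π ≠ 0 := hπ.ne'
          have h2 : Real.sqrt κ₀ ≠ 0 := (Real.sqrt_pos.mpr hκ).ne'
          have h3 : κ₀ ≠ 0 := hκ.ne'
          field_simp
          ring
  have hrpow : κ₀ ^ ((3:ℝ)/2) = κ₀ * Real.sqrt κ₀ := by
    rw [show (3:ℝ)/2 = 1 + 1/2 by norm_num, Real.rpow_add hκ, Real.rpow_one,
      Real.sqrt_eq_rpow]
  rw [hrpow]
  exact hfinal
end

section
/- Let A be a unital C*-algebra and I a closed two-sided ideal of A. Let d ∈ A be self-adjoint, let ρ ∈ I be self-adjoint, set a := d² + ρ, and suppose there is a real κ₀ > 0 such that a - κ₀·1 is positive. Then F := a^{-1/2} · d satisfies: (i) F* - F ∈ I; (ii) F² - 1 ∈ I. -/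
set_option maxHeartbeats 1000000

open Polynomial in
/-- For a selfadjoint element `a`, any real continuous functional calculus applied to `a`
lies in the closure of the set of polynomials in `a`. -/
lemma cfc_mem_closure_polynomial_range {A : Type*} [CStarAlgebra A]
    (a : A) (ha : IsSelfAdjoint a) (f : ℝ → ℝ) (hf : ContinuousOn f (spectrum ℝ a)) :
    cfc f a ∈ closure (Set.range fun p : ℝ[X] => (aeval a p : A)) := by
  rw [cfc_apply f a ha hf]
  have hg : (⟨_, hf.restrict⟩ : C(spectrum ℝ a, ℝ)) ∈
      closure (polynomialFunctions (spectrum ℝ a) : Set C(spectrum ℝ a, ℝ)) := by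
    have h := polynomialFunctions.topologicalClosure (spectrum ℝ a)
    have hmem : (⟨_, hf.restrict⟩ : C(spectrum ℝ a, ℝ)) ∈
        (polynomialFunctions (spectrum ℝ a)).topologicalClosure := by
      rw [h]; trivial
    exact hmem
  refine map_mem_closure (cfcHom_isClosedEmbedding (R := ℝ) ha).continuous hg ?_
  rintro g hg'
  rw [SetLike.mem_coe, polynomialFunctions, Subalgebra.mem_map] at hg'
  obtain ⟨q, -, rfl⟩ := hg'
  refine ⟨q, ?_⟩
  dsimp only
  have h1 : cfc (fun x : ℝ => q.eval x) a = aeval a q := cfc_polynomial q a ha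
  rw [cfc_apply (fun x : ℝ => q.eval x) a ha] at h1
  rw [← h1]
  congr 1

open Polynomial in
lemma aeval_commutator_mem {A : Type*} [Ring A] [Algebra ℝ A]
    (I : TwoSidedIdeal A) (a d : A) (had : a * d - d * a ∈ I) (p : ℝ[X]) :
    (aeval a p : A) * d - d * aeval a p ∈ I := by
  induction p using Polynomial.induction_on with
  | C r =>
    simp only [aeval_C]
    rw [Algebra.commutes r d, sub_self]
    exact I.zero_mem
  | add p q hp hq =>
    have : (aeval a (p + q) : A) * d - d * aeval a (p + q) =
        ((aeval a p : A) * d - d * aeval a p) + ((aeval a q : A) * d - d * aeval a q) := by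
      rw [map_add]; noncomm_ring
    rw [this]
    exact I.add_mem hp hq
  | monomial n r hp =>
    have hx : (aeval a (C r * X ^ (n + 1)) : A) = (aeval a (C r * X ^ n) : A) * a := by
      simp [pow_succ, mul_assoc]
    set x : A := aeval a (C r * X ^ n)
    have : (aeval a (C r * X ^ (n + 1)) : A) * d - d * aeval a (C r * X ^ (n + 1)) =
        x * (a * d - d * a) + (x * d - d * x) * a := by
      rw [hx]; noncomm_ring
    rw [this]
    exact I.add_mem (I.mul_mem_left _ _ had) (I.mul_mem_right _ _ hp)

/-- Let `A` be a unital C*-algebra and `I` a closed two-sided ideal.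
Let `d ∈ A` be self-adjoint, `ρ ∈ I` self-adjoint, set `a := d² + ρ`, and suppose
`a - κ₀·1` is positive for some real `κ₀ > 0`. Then `F := a^{-1/2}·d` satisfies
`F* - F ∈ I` and `F² - 1 ∈ I`. -/
theorem stmt8 {A : Type*} [CStarAlgebra A] [PartialOrder A] [StarOrderedRing A]
    (I : TwoSidedIdeal A) (hI : IsClosed (I : Set A))
    (d : A) (hd : IsSelfAdjoint d) (ρ : A) (hρI : ρ ∈ I) (hρ : IsSelfAdjoint ρ)
    (κ₀ : ℝ) (hκ : 0 < κ₀)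
    (hpos : 0 ≤ d ^ 2 + ρ - κ₀ • (1 : A)) :
    star (Ring.inverse (CFC.sqrt (d ^ 2 + ρ)) * d) -
        Ring.inverse (CFC.sqrt (d ^ 2 + ρ)) * d ∈ I ∧
      (Ring.inverse (CFC.sqrt (d ^ 2 + ρ)) * d) ^ 2 - 1 ∈ I := by
  set a : A := d ^ 2 + ρ with ha_def
  have hle : κ₀ • (1 : A) ≤ a := sub_nonneg.mp hpos
  have h1nonneg : (0 : A) ≤ κ₀ • 1 := smul_nonneg hκ.le zero_le_one
  have ha_nonneg : (0 : A) ≤ a := h1nonneg.trans hle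
  have ha_sa : IsSelfAdjoint a := ha_nonneg.isSelfAdjoint
  -- `a` is a unit
  have hsmul_unit : IsUnit (κ₀ • (1 : A)) := by
    rw [← Algebra.algebraMap_eq_smul_one]
    exact (isUnit_iff_ne_zero.mpr hκ.ne').map (algebraMap ℝ A)
  have ha_unit : IsUnit a := CStarAlgebra.isUnit_of_le _ hle (hsmul_unit.isStrictlyPositive h1nonneg)
  set s : A := CFC.sqrt a with hs_def
  have hs_nonneg : (0 : A) ≤ s := CFC.sqrt_nonneg (a := a)
  have hs_sa : IsSelfAdjoint s := hs_nonneg.isSelfAdjoint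
  have hs2 : s * s = a := CFC.sqrt_mul_sqrt_self a ha_nonneg
  -- `s` is a unit
  obtain ⟨u, hu⟩ := ha_unit
  have hcsu : Commute s (u : A) := by
    rw [hu]
    show s * a = a * s
    rw [← hs2, mul_assoc]
  have hs_unit : IsUnit s := by
    refine ⟨⟨s, s * ↑u⁻¹, ?_, ?_⟩, rfl⟩
    · rw [← mul_assoc, hs2, ← hu, u.mul_inv]
    · rw [mul_assoc, ← (hcsu.units_inv_right).eq, ← mul_assoc, hs2, ← hu, u.mul_inv]
  set e : A := Ring.inverse s with he_def
  have hes : e * s = 1 := Ring.inverse_mul_cancel s hs_unit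
  have hse : s * e = 1 := Ring.mul_inverse_cancel s hs_unit
  have he_star : star e = e := by
    calc star e = star e * (s * e) := by rw [hse, mul_one]
    _ = (star e * s) * e := by rw [mul_assoc]
    _ = (star e * star s) * e := by rw [hs_sa.star_eq]
    _ = star (s * e) * e := by rw [star_mul]
    _ = e := by rw [hse, star_one, one_mul]
  -- the key commutator fact : s * d - d * s ∈ I
  have had : a * d - d * a ∈ I := by
    have : a * d - d * a = ρ * d - d * ρ := by rw [ha_def]; noncomm_ring
    rw [this]
    exact I.sub_mem (I.mul_mem_right _ _ hρI) (I.mul_mem_left _ _ hρI)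
  have hScl : IsClosed {x : A | x * d - d * x ∈ I} := by
    have : {x : A | x * d - d * x ∈ I} = (fun x : A => x * d - d * x) ⁻¹' (I : Set A) := rfl
    rw [this]
    exact hI.preimage (by fun_prop)
  have hs_mem_closure : s ∈ closure (Set.range fun p : Polynomial ℝ => (Polynomial.aeval a p : A)) := by
    have h1 : s = cfc NNReal.sqrt a := CFC.sqrt_eq_cfc
    have h2 : cfc NNReal.sqrt a =
        cfc (fun x : ℝ => (NNReal.sqrt x.toNNReal : ℝ)) a := cfc_nnreal_eq_real _ a ha_nonneg
    rw [h1, h2]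
    exact cfc_mem_closure_polynomial_range a ha_sa _
      (NNReal.continuous_coe.comp <| NNReal.continuous_sqrt.comp continuous_real_toNNReal).continuousOn
  have hcomm : s * d - d * s ∈ I := by
    have hsub : closure (Set.range fun p : Polynomial ℝ => (Polynomial.aeval a p : A)) ⊆
        {x : A | x * d - d * x ∈ I} := by
      apply closure_minimal _ hScl
      rintro - ⟨p, rfl⟩
      exact aeval_commutator_mem I a d had p
    exact hsub hs_mem_closure
  -- the reversed commutator of `e` and `d`
  have key : d * e - e * d = e * (s * d - d * s) * e := by
    have h1 : e * (s * d) * e = d * e := by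
      rw [← mul_assoc, hes, one_mul]
    have h2 : e * (d * s) * e = e * d := by
      rw [mul_assoc e (d * s) e, mul_assoc d s e, hse, mul_one]
    rw [mul_sub, sub_mul, h1, h2]
  have hkey_mem : d * e - e * d ∈ I := by
    rw [key]
    exact I.mul_mem_right _ _ (I.mul_mem_left _ _ hcomm)
  constructor
  · -- F* - F ∈ I
    have hstar : star (e * d) = d * e := by
      rw [star_mul, hd.star_eq, he_star]
    rw [hstar]
    exact hkey_mem
  · -- F² - 1 ∈ I
    have hee : e * e * (s * s) = 1 := by
      rw [mul_assoc, ← mul_assoc e s s, hes, one_mul, hes]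
    have h3 : (e * d) ^ 2 = e * (d * e - e * d) * d + e * e * (d * d) := by
      rw [sq]; noncomm_ring
    have h4 : e * e * (d * d - s * s) = e * e * (d * d) - 1 := by
      rw [mul_sub, hee]
    have hid : (e * d) ^ 2 - 1 = e * (d * e - e * d) * d + e * e * (d * d - s * s) := by
      rw [h3, h4]; abel
    rw [hid]
    refine I.add_mem (I.mul_mem_right _ _ (I.mul_mem_left _ _ hkey_mem)) ?_
    have h5 : d * d - s * s = -ρ := by
      rw [hs2, ha_def, ← sq]; abel
    rw [h5]
    exact I.mul_mem_left _ _ (I.neg_mem hρI)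
end

section
/- Let A be a unital C*-algebra and I a closed two-sided ideal of A. Let d ∈ A be self-adjoint, let ρ ∈ I be self-adjoint, set a := d² + ρ, and suppose there is a real κ₀ > 0 such that a - κ₀·1 is positive. Then F := a^{-1/2} · d is invertible modulo I with parametrix given by F itself: F·F - 1 ∈ I, F*·F - 1 ∈ I, and F·F* - 1 ∈ I. -/
open scoped NNReal


/-- Let `A` be a unital C*-algebra and `I` a closed two-sided ideal.
Let `d ∈ A` be self-adjoint, `ρ ∈ I` self-adjoint, set `a := d² + ρ`, and suppose
`a - κ₀·1` is positive for some real `κ₀ > 0`. Then `F := a^{-1/2}·d` is invertible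
modulo `I` with parametrix `F` itself: `F·F - 1 ∈ I`, `F*·F - 1 ∈ I` and
`F·F* - 1 ∈ I`. -/
theorem stmt9 {A : Type*} [CStarAlgebra A] [PartialOrder A] [StarOrderedRing A]
    (I : TwoSidedIdeal A) (hI : IsClosed (I : Set A))
    (d : A) (hd : IsSelfAdjoint d) (ρ : A) (hρI : ρ ∈ I) (hρ : IsSelfAdjoint ρ)
    (κ₀ : ℝ) (hκ : 0 < κ₀)
    (hpos : 0 ≤ d ^ 2 + ρ - κ₀ • (1 : A)) :
    (Ring.inverse (CFC.sqrt (d ^ 2 + ρ)) * d) *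
        (Ring.inverse (CFC.sqrt (d ^ 2 + ρ)) * d) - 1 ∈ I ∧
      star (Ring.inverse (CFC.sqrt (d ^ 2 + ρ)) * d) *
        (Ring.inverse (CFC.sqrt (d ^ 2 + ρ)) * d) - 1 ∈ I ∧
      (Ring.inverse (CFC.sqrt (d ^ 2 + ρ)) * d) *
        star (Ring.inverse (CFC.sqrt (d ^ 2 + ρ)) * d) - 1 ∈ I := by
  set a : A := d ^ 2 + ρ with ha_def
  have ha_sa : IsSelfAdjoint a := (hd.pow 2).add hρ
  have hsm : (0 : A) ≤ κ₀ • 1 := smul_nonneg hκ.le zero_le_one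
  have hle : κ₀ • (1 : A) ≤ a := by rwa [← sub_nonneg]
  have ha_nonneg : (0 : A) ≤ a := hsm.trans hle
  have hu1 : IsUnit (κ₀ • (1 : A)) := by
    rw [← Algebra.algebraMap_eq_smul_one]
    exact (isUnit_iff_ne_zero.mpr hκ.ne').map (algebraMap ℝ A)
  have hua : IsUnit a := CStarAlgebra.isUnit_of_le _ hle (IsStrictlyPositive.iff_of_unital.mpr ⟨hsm, hu1⟩)
  set s : A := CFC.sqrt a with hs_def
  have hss : s * s = a := CFC.sqrt_mul_sqrt_self a ha_nonneg
  have hs_nonneg : (0 : A) ≤ s := CFC.sqrt_nonneg a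
  have hs_sa : IsSelfAdjoint s := .of_nonneg hs_nonneg
  have hcsa : Commute s a := by
    rw [← hss]; exact (Commute.refl s).mul_right (Commute.refl s)
  obtain ⟨u, hu⟩ := hua
  have hcu : Commute s (↑u⁻¹ : A) := by
    apply Commute.units_inv_right
    rw [hu]; exact hcsa
  have hus : IsUnit s := by
    refine isUnit_iff_exists.mpr ⟨s * ↑u⁻¹, ?_, ?_⟩
    · rw [← mul_assoc, hss, ← hu, u.mul_inv]
    · rw [mul_assoc, hcu.symm.eq, ← mul_assoc, hss, ← hu, u.mul_inv]
  set t : A := Ring.inverse s with ht_def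
  have hts : t * s = 1 := Ring.inverse_mul_cancel s hus
  have hst : s * t = 1 := Ring.mul_inverse_cancel s hus
  have hstar_t : star t = t := by
    have h1 : star t * s = 1 := by
      calc star t * s = star (s * t) := by rw [star_mul, hs_sa.star_eq]
        _ = 1 := by rw [hst, star_one]
    calc star t = star t * (s * t) := by rw [hst, mul_one]
      _ = (star t * s) * t := by rw [mul_assoc]
      _ = t := by rw [h1, one_mul]
  -- membership of s in elemental star algebra of a
  have hs_cfc : s = cfc (fun x : ℂ => ((NNReal.sqrt x.re.toNNReal : ℝ) : ℂ)) a := by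
    rw [hs_def, CFC.sqrt_eq_cfc, cfc_nnreal_eq_real NNReal.sqrt a ha_nonneg,
      cfc_real_eq_complex _ ha_sa]
  have hcont : Continuous (fun x : ℂ => ((NNReal.sqrt x.re.toNNReal : ℝ) : ℂ)) :=
    Complex.continuous_ofReal.comp <| NNReal.continuous_coe.comp <|
      NNReal.continuous_sqrt.comp <| continuous_real_toNNReal.comp Complex.continuous_re
  have hmem : s ∈ StarAlgebra.elemental ℂ a := by
    rw [hs_cfc, cfc_apply _ a ha_sa.isStarNormal hcont.continuousOn,
      cfcHom_eq_of_isStarNormal]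
    exact SetLike.coe_mem _
  have hmem' : s ∈ closure (StarAlgebra.adjoin ℂ {a} : Set A) := hmem
  set P : Set A := {x | d * x - x * d ∈ I ∧ d * star x - star x * d ∈ I} with hP_def
  have hPclosed : IsClosed P := by
    have h1 : IsClosed {x : A | d * x - x * d ∈ I} :=
      hI.preimage (by fun_prop : Continuous fun x : A => d * x - x * d)
    have h2 : IsClosed {x : A | d * star x - star x * d ∈ I} :=
      hI.preimage (by fun_prop : Continuous fun x : A => d * star x - star x * d)
    exact h1.inter h2
  have hsubP : (StarAlgebra.adjoin ℂ {a} : Set A) ⊆ P := by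
    intro x hx
    induction hx using StarAlgebra.adjoin_induction with
    | mem x hx =>
      rw [Set.mem_singleton_iff] at hx
      subst hx
      have hda : d * a - a * d = d * ρ - ρ * d := by rw [ha_def]; noncomm_ring
      constructor
      · rw [hda]
        exact sub_mem (I.mul_mem_left _ _ hρI) (I.mul_mem_right _ _ hρI)
      · rw [ha_sa.star_eq, hda]
        exact sub_mem (I.mul_mem_left _ _ hρI) (I.mul_mem_right _ _ hρI)
    | algebraMap r =>
      constructor
      · rw [← Algebra.commutes r d, sub_self]; exact I.zero_mem
      · rw [show star ((algebraMap ℂ A) r) = algebraMap ℂ A (star r) by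
            rw [algebraMap_star_comm], ← Algebra.commutes (star r) d, sub_self]
        exact I.zero_mem
    | add x y hx hy hx' hy' =>
      constructor
      · have : d * (x + y) - (x + y) * d = (d * x - x * d) + (d * y - y * d) := by
          noncomm_ring
        rw [this]; exact add_mem hx'.1 hy'.1
      · have : d * star (x + y) - star (x + y) * d
            = (d * star x - star x * d) + (d * star y - star y * d) := by
          rw [star_add]; noncomm_ring
        rw [this]; exact add_mem hx'.2 hy'.2
    | mul x y hx hy hx' hy' =>
      constructor
      · have : d * (x * y) - (x * y) * d = (d * x - x * d) * y + x * (d * y - y * d) := by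
          noncomm_ring
        rw [this]
        exact add_mem (I.mul_mem_right _ _ hx'.1) (I.mul_mem_left _ _ hy'.1)
      · have : d * star (x * y) - star (x * y) * d
            = (d * star y - star y * d) * star x + star y * (d * star x - star x * d) := by
          rw [star_mul]; noncomm_ring
        rw [this]
        exact add_mem (I.mul_mem_right _ _ hy'.2) (I.mul_mem_left _ _ hx'.2)
    | star x hx hx' =>
      exact ⟨hx'.2, by rw [star_star]; exact hx'.1⟩
  have hsP : s ∈ P := closure_minimal hsubP hPclosed hmem'
  have hds : d * s - s * d ∈ I := hsP.1
  have hdt : d * t - t * d ∈ I := by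
    have h : t * (s * d - d * s) * t = d * t - t * d := by
      calc t * (s * d - d * s) * t = (t * s) * (d * t) - (t * d) * (s * t) := by noncomm_ring
        _ = d * t - t * d := by rw [hts, hst, one_mul, mul_one]
    rw [← h]
    refine I.mul_mem_right _ _ (I.mul_mem_left _ _ ?_)
    have : s * d - d * s = -(d * s - s * d) := by noncomm_ring
    rw [this]; exact neg_mem hds
  have h1 : t * t * a = 1 := by
    rw [← hss, ← mul_assoc, mul_assoc t t s, hts, mul_one, hts]
  have goal1 : (t * d) * (t * d) - 1 ∈ I := by
    have e : (t * d) * (t * d) - (t * t * a) = t * (d * t - t * d) * d - t * t * ρ := by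
      rw [ha_def]; noncomm_ring
    rw [h1] at e
    rw [e]
    exact sub_mem (I.mul_mem_right _ _ (I.mul_mem_left _ _ hdt)) (I.mul_mem_left _ _ hρI)
  have hstarF : star (t * d) - (t * d) = d * t - t * d := by
    rw [star_mul, hd.star_eq, hstar_t]
  refine ⟨goal1, ?_, ?_⟩
  · have e : star (t * d) * (t * d) - 1
        = (star (t * d) - (t * d)) * (t * d) + ((t * d) * (t * d) - 1) := by noncomm_ring
    rw [e, hstarF]
    exact add_mem (I.mul_mem_right _ _ hdt) goal1
  · have e : (t * d) * star (t * d) - 1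
        = (t * d) * (star (t * d) - (t * d)) + ((t * d) * (t * d) - 1) := by noncomm_ring
    rw [e, hstarF]
    exact add_mem (I.mul_mem_left _ _ hdt) goal1
end

section
/- Let H be a complex Hilbert space, let G be a bounded operator on H, let c be a bounded self-adjoint operator on H, and let κ₀ > 0 be a real number such that ⟨c x, x⟩ ≥ κ₀ ‖x‖² for all x ∈ H. Set a := G* ∘ G + c. Then a is self-adjoint with ⟨a x, x⟩ ≥ κ₀ ‖x‖² for all x, a is invertible, and for every σ ∈ H one has ‖a^{-1/2} σ‖² + ‖G (a^{-1/2} σ)‖² ≤ (1 + 1/κ₀) ‖σ‖². -/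
open scoped InnerProductSpace

/-- Let `H` be a complex Hilbert space, `G` a bounded operator on `H`,
`c` a bounded self-adjoint operator on `H` with `⟨c x, x⟩ ≥ κ₀‖x‖²` for all `x`, where
`κ₀ > 0` is real. Set `a := G* ∘ G + c`. Then `a` is self-adjoint with
`⟨a x, x⟩ ≥ κ₀‖x‖²` for all `x`, `a` is invertible, and for every `σ ∈ H`,
`‖a^{-1/2}σ‖² + ‖G (a^{-1/2}σ)‖² ≤ (1 + 1/κ₀)‖σ‖²`. -/
theorem stmt11 {H : Type*} [NormedAddCommGroup H] [InnerProductSpace ℂ H] [CompleteSpace H]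
    (G c : H →L[ℂ] H) (hc : IsSelfAdjoint c) (κ₀ : ℝ) (hκ : 0 < κ₀)
    (hcoercive : ∀ x : H, κ₀ * ‖x‖ ^ 2 ≤ (⟪c x, x⟫_ℂ).re) :
    IsSelfAdjoint (star G * G + c) ∧
      (∀ x : H, κ₀ * ‖x‖ ^ 2 ≤ (⟪(star G * G + c) x, x⟫_ℂ).re) ∧
      IsUnit (star G * G + c) ∧
      ∀ σ : H,
        ‖Ring.inverse (CFC.sqrt (star G * G + c)) σ‖ ^ 2 +
            ‖G (Ring.inverse (CFC.sqrt (star G * G + c)) σ)‖ ^ 2 ≤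
          (1 + 1 / κ₀) * ‖σ‖ ^ 2 := by
  set a : H →L[ℂ] H := star G * G + c with ha_def
  have ha_sa : IsSelfAdjoint a := (IsSelfAdjoint.star_mul_self G).add hc
  -- the quadratic form of `a`
  have hquad : ∀ x : H, (⟪a x, x⟫_ℂ).re = ‖G x‖ ^ 2 + (⟪c x, x⟫_ℂ).re := by
    intro x
    have h1 : ⟪(star G * G) x, x⟫_ℂ = ⟪G x, G x⟫_ℂ := by
      rw [ContinuousLinearMap.mul_apply, ContinuousLinearMap.star_eq_adjoint,
        ContinuousLinearMap.adjoint_inner_left]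
    have : ⟪a x, x⟫_ℂ = ⟪(star G * G) x, x⟫_ℂ + ⟪c x, x⟫_ℂ := by
      simp [ha_def, inner_add_left]
    rw [this, Complex.add_re, h1, ← RCLike.re_to_complex, inner_self_eq_norm_sq]
  have hcoer : ∀ x : H, κ₀ * ‖x‖ ^ 2 ≤ (⟪a x, x⟫_ℂ).re := by
    intro x
    rw [hquad x]
    have := hcoercive x
    nlinarith [sq_nonneg ‖G x‖]
  -- `a` is invertible
  have haU : IsUnit a := by
    refine ContinuousLinearMap.isUnit_of_forall_le_norm_inner_map a (c := κ₀.toNNReal)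
      (by simpa using hκ) fun x => ?_
    calc ‖x‖ ^ 2 * (κ₀.toNNReal : ℝ) = κ₀ * ‖x‖ ^ 2 := by
          rw [Real.coe_toNNReal _ hκ.le]; ring
      _ ≤ (⟪a x, x⟫_ℂ).re := hcoer x
      _ ≤ |(⟪a x, x⟫_ℂ).re| := le_abs_self _
      _ ≤ ‖⟪a x, x⟫_ℂ‖ := Complex.abs_re_le_norm _
  refine ⟨ha_sa, hcoer, haU, ?_⟩
  -- `a` is nonnegative
  have ha_pos : 0 ≤ a := by
    rw [ContinuousLinearMap.nonneg_iff_isPositive]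
    exact ⟨ha_sa.isSymmetric, fun x => le_trans (by positivity) (hcoer x)⟩
  set b : H →L[ℂ] H := CFC.sqrt a with hb_def
  have hb2 : b * b = a := CFC.sqrt_mul_sqrt_self a ha_pos
  have hb_nonneg : (0 : H →L[ℂ] H) ≤ b := CFC.sqrt_nonneg a
  have hb_sa : IsSelfAdjoint b := IsSelfAdjoint.of_nonneg hb_nonneg
  -- `b` is invertible
  have hbU : IsUnit b := by
    have h1 : Ring.inverse a * b * b = 1 := by
      rw [mul_assoc, hb2, Ring.inverse_mul_cancel a haU]
    have h2 : b * (b * Ring.inverse a) = 1 := by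
      rw [← mul_assoc, hb2, Ring.mul_inverse_cancel a haU]
    have h3 : Ring.inverse a * b = b * Ring.inverse a := by
      calc Ring.inverse a * b
          = Ring.inverse a * b * (b * (b * Ring.inverse a)) := by rw [h2, mul_one]
        _ = Ring.inverse a * b * b * (b * Ring.inverse a) := by
            simp only [mul_assoc]
        _ = b * Ring.inverse a := by rw [h1, one_mul]
    refine isUnit_iff_exists.mpr ⟨b * Ring.inverse a, h2, ?_⟩
    rw [← h3]; exact h1
  intro σ
  set y : H := Ring.inverse b σ with hy_def
  have hby : b y = σ := by
    have := Ring.mul_inverse_cancel b hbU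
    calc b y = (b * Ring.inverse b) σ := rfl
      _ = σ := by rw [this]; rfl
  -- the key identity : re ⟪a y, y⟫ = ‖σ‖²
  have hkey : (⟪a y, y⟫_ℂ).re = ‖σ‖ ^ 2 := by
    have h1 : a y = b (b y) := by rw [← hb2]; rfl
    have h2 : ⟪b (b y), y⟫_ℂ = ⟪b y, b y⟫_ℂ := hb_sa.isSymmetric (b y) y
    rw [h1, h2, hby, ← RCLike.re_to_complex, inner_self_eq_norm_sq]
  have hGy : ‖G y‖ ^ 2 + κ₀ * ‖y‖ ^ 2 ≤ ‖σ‖ ^ 2 := by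
    rw [← hkey, hquad y]
    have := hcoercive y
    linarith
  have hy_bound : ‖y‖ ^ 2 ≤ ‖σ‖ ^ 2 / κ₀ := by
    rw [le_div_iff₀ hκ]
    have := hcoer y
    rw [hkey] at this
    linarith
  have hGy' : ‖G y‖ ^ 2 ≤ ‖σ‖ ^ 2 := by nlinarith [sq_nonneg ‖y‖]
  calc ‖y‖ ^ 2 + ‖G y‖ ^ 2 ≤ ‖σ‖ ^ 2 / κ₀ + ‖σ‖ ^ 2 := add_le_add hy_bound hGy'
    _ = (1 + 1 / κ₀) * ‖σ‖ ^ 2 := by field_simp; ring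
end
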